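/- arXiv:2412.14315 — 2 statements merged into one kernel-verified Lean document; each statement's English description precedes it below -/
import Mathlib

section
/- Let G be drawn from a distribution in NSSBM(n,p,p̄,q). There is a universal constant C > 0 such that for every δ ∈ (0,1), with probability at least 1 − δ, every vertex v ∈ V satisfies ‖a_v − a★_v‖₁ ≤ C·(n·p̄ + √(n·p̄·log(n/δ)) + log(n/δ)) and ‖l_v − E[l_v]‖₁ ≤ C·(n·p̄ + √(n·p̄·log(n/δ)) + log(n/δ)), where a_v and l_v denote the v-th rows of the adjacency matrix A and the Laplacian L respectively, and a★_v the v-th row of E[A]. -/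
open Matrix MeasureTheory
open scoped BigOperators ENNReal Classical

noncomputable section

instance measSG {n : ℕ} : MeasurableSpace (SimpleGraph (Fin n)) := ⊤

variable {n : ℕ}

/-- Adjacency matrix of a graph, over `ℝ`. -/
def adjM (G : SimpleGraph (Fin n)) : Matrix (Fin n) (Fin n) ℝ :=
  Matrix.of fun v w => if G.Adj v w then 1 else 0

/-- Laplacian of a weighted adjacency matrix. -/
def wlap (W : Matrix (Fin n) (Fin n) ℝ) : Matrix (Fin n) (Fin n) ℝ :=
  Matrix.diagonal (fun v => ∑ w, W v w) - W

/-- Unnormalized Laplacian of a graph. -/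
def lap (G : SimpleGraph (Fin n)) : Matrix (Fin n) (Fin n) ℝ := wlap (adjM G)

/-- `eig M k` is the `(k+1)`-st smallest eigenvalue (root of the characteristic
polynomial, with multiplicity) of `M`; e.g. `eig M 1 = λ₂`. -/
def eig (M : Matrix (Fin n) (Fin n) ℝ) (k : ℕ) : ℝ :=
  (M.charpoly.roots.sort (· ≤ ·)).getD k 0

def IsUnitEigenvector (M : Matrix (Fin n) (Fin n) ℝ) (t : ℝ) (u : Fin n → ℝ) : Prop :=
  M.mulVec u = t • u ∧ ∑ v, (u v) ^ 2 = 1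

/-- Membership in the first community `P₁ = {1, …, n/2}`. -/
def inP1 (n : ℕ) (v : Fin n) : Prop := (v : ℕ) < n / 2

/-- `v` and `w` are in the same community. -/
def sameSide (n : ℕ) (v w : Fin n) : Prop := inP1 n v ↔ inP1 n w

/-- Number of neighbours of `v` in its own community. -/
def din (G : SimpleGraph (Fin n)) (v : Fin n) : ℕ :=
  Nat.card {w : Fin n // G.Adj v w ∧ sameSide n v w}

/-- Number of neighbours of `v` in the other community. -/
def dout (G : SimpleGraph (Fin n)) (v : Fin n) : ℕ :=
  Nat.card {w : Fin n // G.Adj v w ∧ ¬ sameSide n v w}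

/-- Degree of `v`. -/
def deg (G : SimpleGraph (Fin n)) (v : Fin n) : ℕ :=
  Nat.card {w : Fin n // G.Adj v w}

/-- `μ` samples each pair `(v,w)`, `v < w`, as an edge independently with probability `P v w`. -/
def IsEdgeProduct (P : Fin n → Fin n → ℝ) (μ : PMF (SimpleGraph (Fin n))) : Prop :=
  ∀ G : SimpleGraph (Fin n),
    μ G = ∏ e ∈ Finset.univ.filter (fun e : Fin n × Fin n => e.1 < e.2),
      (if G.Adj e.1 e.2 then ENNReal.ofReal (P e.1 e.2) else ENNReal.ofReal (1 - P e.1 e.2))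

/-- The edge-probability matrix of a member of the `NSSBM(n,p,p̄,q)` family. -/
def NSSBMprob (n : ℕ) (p pbar q : ℝ) (P : Fin n → Fin n → ℝ) : Prop :=
  (∀ v w, P v w = P w v) ∧
  (∀ v w : Fin n, v ≠ w → sameSide n v w → p ≤ P v w ∧ P v w ≤ pbar) ∧
  (∀ v w : Fin n, ¬ sameSide n v w → P v w = q)

/-- The ideal second eigenvector `u₂⋆`. -/
def u2star (n : ℕ) : Fin n → ℝ :=
  fun v => if inP1 n v then 1 / Real.sqrt n else -(1 / Real.sqrt n)

/-- Spectral bisection with matrix `M` recovers the planted partition of `G`. -/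
def BisectCorrect (n : ℕ) (M : Matrix (Fin n) (Fin n) ℝ) : Prop :=
  ∀ u : Fin n → ℝ, IsUnitEigenvector M (eig M 1) u →
    ({v : Fin n | u v < 0} = {v : Fin n | inP1 n v} ∨
     {v : Fin n | u v < 0} = {v : Fin n | ¬ inP1 n v})

/-- Off-diagonal part of the probability matrix: the expected adjacency matrix. -/
def offP (P : Fin n → Fin n → ℝ) : Matrix (Fin n) (Fin n) ℝ :=
  Matrix.of fun v w => if v = w then 0 else P v w

/-- Expected unnormalized Laplacian. -/
def expLap (P : Fin n → Fin n → ℝ) : Matrix (Fin n) (Fin n) ℝ := wlap (offP P)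

/-- Euclidean norm. -/
def l2 (x : Fin n → ℝ) : ℝ := Real.sqrt (∑ v, (x v) ^ 2)

/-- Inner product. -/
def dotp (x y : Fin n → ℝ) : ℝ := ∑ v, x v * y v

/-- Entrywise max (ℓ∞) norm. -/
def linf (x : Fin n → ℝ) : ℝ := ⨆ v, |x v|

/-- ℓ2 → ℓ2 operator norm of a matrix. -/
def opNorm (M : Matrix (Fin n) (Fin n) ℝ) : ℝ :=
  ‖LinearMap.toContinuousLinearMap (Matrix.toEuclideanLin M)‖

/-- The crossing edges of `μ` are independent `Bernoulli(q)`, while the internal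
edges are arbitrary (possibly depending on the crossing edges). -/
def CrossingProduct (n : ℕ) (q : ℝ) (μ : PMF (SimpleGraph (Fin n))) : Prop :=
  ∃ (ν : PMF (SimpleGraph (Fin n))) (κ : SimpleGraph (Fin n) → PMF (SimpleGraph (Fin n))),
    IsEdgeProduct (fun v w => if sameSide n v w then 0 else q) ν ∧
    (∀ H, ∀ G ∈ (κ H).support, ∀ v w, ¬ sameSide n v w → ((G.Adj v w) ↔ H.Adj v w)) ∧
    μ = ν.bind κ


namespace RowAux

variable {n : ℕ}

abbrev EdgeIdx (n : ℕ) := {e : Fin n × Fin n // e.1 < e.2}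

def graphOf (f : EdgeIdx n → Bool) : SimpleGraph (Fin n) where
  Adj v w := (if h : v < w then f ⟨(v, w), h⟩ else
      if h : w < v then f ⟨(w, v), h⟩ else false) = true
  symm := by
    constructor
    intro v w hvw
    rcases lt_trichotomy v w with h | h | h
    · rw [dif_neg (asymm h), dif_pos h]; rwa [dif_pos h] at hvw
    · subst h; simp [lt_irrefl] at hvw
    · rw [dif_pos h]; rwa [dif_neg (asymm h), dif_pos h] at hvw
  loopless := by constructor; intro v; simp

lemma graphOf_adj (f : EdgeIdx n → Bool) {v w : Fin n} (h : v < w) :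
    (graphOf f).Adj v w ↔ f ⟨(v, w), h⟩ = true := by
  show (if h : v < w then _ else _) = true ↔ _
  rw [dif_pos h]

def graphTo (G : SimpleGraph (Fin n)) (e : EdgeIdx n) : Bool :=
  if G.Adj e.1.1 e.1.2 then true else false

lemma graphOf_bijective : Function.Bijective (graphOf (n := n)) := by
  refine Function.bijective_iff_has_inverse.2 ⟨graphTo, ?_, ?_⟩
  · intro f
    funext e
    obtain ⟨⟨v, w⟩, h⟩ := e
    simp only [graphTo]
    rw [if_congr (graphOf_adj f h) rfl rfl]
    cases hf : f ⟨(v, w), h⟩ <;> simp [hf]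
  · intro G
    ext v w
    rcases lt_trichotomy v w with h | h | h
    · rw [graphOf_adj _ h]; simp [graphTo]
    · subst h; simp
    · have : (graphOf (graphTo G)).Adj v w ↔ (graphOf (graphTo G)).Adj w v :=
        ⟨fun h' => h'.symm, fun h' => h'.symm⟩
      rw [this, graphOf_adj _ h]
      simp [graphTo, SimpleGraph.adj_comm]

lemma sum_graph_prod (g : Fin n × Fin n → Bool → ℝ≥0∞) :
    ∑ G : SimpleGraph (Fin n),
      ∏ e ∈ Finset.univ.filter (fun e : Fin n × Fin n => e.1 < e.2),
        (if G.Adj e.1 e.2 then g e true else g e false)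
    = ∏ e ∈ Finset.univ.filter (fun e : Fin n × Fin n => e.1 < e.2),
        (g e true + g e false) := by
  rw [← (graphOf_bijective (n := n)).sum_comp
    (fun G => ∏ e ∈ Finset.univ.filter (fun e : Fin n × Fin n => e.1 < e.2),
      (if G.Adj e.1 e.2 then g e true else g e false))]
  have key : ∀ f : EdgeIdx n → Bool,
      (∏ e ∈ Finset.univ.filter (fun e : Fin n × Fin n => e.1 < e.2),
        (if (graphOf f).Adj e.1 e.2 then g e true else g e false))
      = ∏ e : EdgeIdx n, g e.1 (f e) := by
    intro f
    rw [Finset.prod_subtype (Finset.univ.filter (fun e : Fin n × Fin n => e.1 < e.2))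
      (p := fun e : Fin n × Fin n => e.1 < e.2) (by simp)]
    refine Finset.prod_congr rfl fun e _ => ?_
    obtain ⟨⟨v, w⟩, h⟩ := e
    rw [if_congr (graphOf_adj f h) rfl rfl]
    cases hf : f ⟨(v, w), h⟩ <;> simp [hf]
  simp only [key]
  rw [← Fintype.prod_sum (fun (e : EdgeIdx n) (b : Bool) => g e.1 b)]
  rw [Finset.prod_subtype (Finset.univ.filter (fun e : Fin n × Fin n => e.1 < e.2))
      (p := fun e : Fin n × Fin n => e.1 < e.2) (by simp)]
  exact Finset.prod_congr rfl fun e _ => by simp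

lemma cyl_measure (P : Fin n → Fin n → ℝ) (μ : PMF (SimpleGraph (Fin n)))
    (hμ : IsEdgeProduct P μ)
    (hP : ∀ e : Fin n × Fin n, e.1 < e.2 → 0 ≤ P e.1 e.2 ∧ P e.1 e.2 ≤ 1)
    (T : Finset (Fin n × Fin n)) (hT : ∀ e ∈ T, e.1 < e.2) :
    μ.toMeasure {G | ∀ e ∈ T, G.Adj e.1 e.2} = ∏ e ∈ T, ENNReal.ofReal (P e.1 e.2) := by
  classical
  set F : Finset (Fin n × Fin n) := Finset.univ.filter (fun e : Fin n × Fin n => e.1 < e.2)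
    with hF
  have hTF : T ⊆ F := fun e he => by simp [hF, hT e he]
  set g : Fin n × Fin n → Bool → ℝ≥0∞ := fun e b =>
    (if b then ENNReal.ofReal (P e.1 e.2) else ENNReal.ofReal (1 - P e.1 e.2)) *
      (if e ∈ T then (if b then 1 else 0) else 1) with hg
  have hmeas : MeasurableSet {G : SimpleGraph (Fin n) | ∀ e ∈ T, G.Adj e.1 e.2} := trivial
  rw [PMF.toMeasure_apply μ hmeas, tsum_fintype]
  have step1 : ∀ G : SimpleGraph (Fin n),
      ({G : SimpleGraph (Fin n) | ∀ e ∈ T, G.Adj e.1 e.2}).indicator μ G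
      = ∏ e ∈ F, (if G.Adj e.1 e.2 then g e true else g e false) := by
    intro G
    have : (∏ e ∈ F, (if G.Adj e.1 e.2 then g e true else g e false))
        = (∏ e ∈ F, (if G.Adj e.1 e.2 then ENNReal.ofReal (P e.1 e.2)
            else ENNReal.ofReal (1 - P e.1 e.2))) *
          ∏ e ∈ F, (if e ∈ T then (if G.Adj e.1 e.2 then (1:ℝ≥0∞) else 0) else 1) := by
      rw [← Finset.prod_mul_distrib]
      refine Finset.prod_congr rfl fun e _ => ?_
      by_cases h : G.Adj e.1 e.2 <;> simp [hg, h]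
    rw [this, ← hμ G, Finset.prod_ite_mem F T, Finset.inter_eq_right.mpr hTF,
      Finset.prod_boole]
    simp only [Set.indicator_apply, Set.mem_setOf_eq]
    by_cases h : ∀ e ∈ T, G.Adj e.1 e.2 <;> simp [h]
  simp only [step1]
  rw [sum_graph_prod g]
  have : ∀ e ∈ F, g e true + g e false
      = (if e ∈ T then ENNReal.ofReal (P e.1 e.2) else 1) := by
    intro e he
    have he' : e.1 < e.2 := by simpa [hF] using he
    obtain ⟨h0, h1⟩ := hP e he'
    by_cases h : e ∈ T
    · simp [hg, h]
    · simp only [hg, h, if_false, if_true, mul_one, Bool.false_eq_true]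
      rw [← ENNReal.ofReal_add h0 (by linarith)]
      norm_num
  rw [Finset.prod_congr rfl this, Finset.prod_ite_mem F T,
    Finset.inter_eq_right.mpr hTF]

lemma tail_real (m : ℕ) (pbar δ : ℝ) (h2 : 2 ≤ m) (hp : 0 ≤ pbar) (hδ : 0 < δ) (hδ1 : δ < 1) :
    ((m - 1).choose ⌈9 * ((m:ℝ) * pbar) + Real.log (m / δ)⌉₊ : ℝ) *
      pbar ^ ⌈9 * ((m:ℝ) * pbar) + Real.log (m / δ)⌉₊ ≤ δ / m := by
  set y := (m:ℝ) * pbar with hy'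
  set L := Real.log (m / δ) with hL'
  have hm1 : (1:ℝ) ≤ m := by exact_mod_cast Nat.one_le_of_lt h2
  have hL : 0 < L := Real.log_pos ((one_lt_div hδ).2 (lt_of_lt_of_le hδ1 hm1))
  have hy : 0 ≤ y := mul_nonneg (by positivity) hp
  set k := ⌈9 * y + L⌉₊ with hk'
  have hkR : 9 * y + L ≤ k := Nat.le_ceil _
  have hk0 : 0 < k := Nat.ceil_pos.2 (by linarith)
  have hkpos : (0:ℝ) < k := by exact_mod_cast hk0
  have hfac : (0:ℝ) < k.factorial := by exact_mod_cast k.factorial_pos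
  have he0 : (0:ℝ) < Real.exp 1 := Real.exp_pos 1
  have he3 : Real.exp 1 < 3 := lt_trans Real.exp_one_lt_d9 (by norm_num)
  have step1 : ((m - 1).choose k : ℝ) * k.factorial ≤ (m:ℝ) ^ k := by
    have h : (m - 1).choose k * k.factorial ≤ m ^ k := by
      calc (m - 1).choose k * k.factorial = (m-1).descFactorial k := by
            rw [Nat.descFactorial_eq_factorial_mul_choose]; ring
        _ ≤ (m-1) ^ k := Nat.descFactorial_le_pow _ _
        _ ≤ m ^ k := Nat.pow_le_pow_left (Nat.sub_le _ _) _
    exact_mod_cast h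
  have step2 : (k:ℝ) ^ k ≤ k.factorial * Real.exp k := by
    have h1 : (k:ℝ) ^ k / k.factorial ≤ Real.exp k := by
      refine le_trans ?_ (Real.sum_le_exp_of_nonneg (by positivity) (k+1))
      exact Finset.single_le_sum (f := fun i => (k:ℝ)^i / i.factorial)
        (fun i _ => by positivity) (Finset.mem_range.2 (Nat.lt_succ_self k))
    calc (k:ℝ)^k = ((k:ℝ)^k / k.factorial) * k.factorial := by field_simp
      _ ≤ Real.exp k * k.factorial := mul_le_mul_of_nonneg_right h1 hfac.le
      _ = k.factorial * Real.exp k := mul_comm _ _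
  have hbase : 0 ≤ y * Real.exp 1 / k := by positivity
  have hb2 : y * Real.exp 1 / k ≤ 1 / Real.exp 1 := by
    rw [div_le_div_iff₀ hkpos he0]
    have h9 : y * (Real.exp 1 * Real.exp 1) ≤ y * 9 :=
      mul_le_mul_of_nonneg_left (by nlinarith) hy
    nlinarith
  calc ((m - 1).choose k : ℝ) * pbar ^ k
      ≤ ((m:ℝ) ^ k / k.factorial) * pbar ^ k := by
        apply mul_le_mul_of_nonneg_right _ (by positivity)
        rw [le_div_iff₀ hfac]; exact step1
    _ = y ^ k / k.factorial := by rw [hy', mul_pow]; ring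
    _ ≤ y ^ k * Real.exp k / (k:ℝ)^k := by
        rw [div_le_div_iff₀ hfac (by positivity)]
        calc y^k * (k:ℝ)^k ≤ y^k * (k.factorial * Real.exp k) :=
              mul_le_mul_of_nonneg_left step2 (by positivity)
          _ = y^k * Real.exp k * k.factorial := by ring
    _ = (y * Real.exp 1 / k) ^ k := by
        rw [← Real.exp_one_pow (n := k)]; ring
    _ ≤ (1 / Real.exp 1) ^ k := pow_le_pow_left₀ hbase hb2 k
    _ = Real.exp (-(k:ℝ)) := by
        rw [one_div, ← Real.exp_neg, ← Real.exp_nat_mul]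
        congr 1; ring
    _ ≤ Real.exp (-L) := Real.exp_le_exp.2 (by linarith)
    _ = δ / m := by
        rw [hL', Real.exp_neg, Real.exp_log (by positivity), inv_div]

end RowAux

/-- **Lemma (ℓ₁-norm concentration of the rows of `A` and `L`).**
In the NSSBM setting, there is a universal constant `C > 0` such that for every
`δ ∈ (0,1)`, with probability at least `1 - δ`, every vertex `v` satisfies
`‖a_v - a⋆_v‖₁ ≤ C(n p̄ + √(n p̄ log(n/δ)) + log(n/δ))` and
`‖l_v - E[l_v]‖₁ ≤ C(n p̄ + √(n p̄ log(n/δ)) + log(n/δ))`. -/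
theorem row_l1_concentration :
    ∃ C : ℝ, 0 < C ∧ ∀ n : ℕ, Even n →
      ∀ p pbar q δ : ℝ, 0 ≤ q → q < p → p ≤ pbar → pbar ≤ 1 → 0 < δ → δ < 1 →
      ∀ (P : Fin n → Fin n → ℝ) (μ : PMF (SimpleGraph (Fin n))),
        NSSBMprob n p pbar q P → IsEdgeProduct P μ →
        1 - ENNReal.ofReal δ ≤ μ.toMeasure {G |
          ∀ v : Fin n,
            (∑ w, |adjM G v w - offP P v w|) ≤
              C * ((n : ℝ) * pbar + Real.sqrt ((n : ℝ) * pbar * Real.log (n / δ)) +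
                Real.log (n / δ)) ∧
            (∑ w, |lap G v w - expLap P v w|) ≤
              C * ((n : ℝ) * pbar + Real.sqrt ((n : ℝ) * pbar * Real.log (n / δ)) +
                Real.log (n / δ))} := by
  classical
  refine ⟨20, by norm_num, ?_⟩
  intro n hn p pbar q δ hq hqp hppbar hpbar1 hδ hδ1 P μ hNS hEP
  rcases Nat.eq_zero_or_pos n with h0 | hpos
  · subst h0
    calc 1 - ENNReal.ofReal δ ≤ 1 := tsub_le_self
      _ = μ.toMeasure Set.univ := measure_univ.symm
      _ ≤ _ := measure_mono (fun G _ => by intro v; exact v.elim0)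
  have h2 : 2 ≤ n := by rcases hn with ⟨m, rfl⟩; omega
  obtain ⟨hsymm, hin, hout⟩ := hNS
  have hp0 : 0 < p := lt_of_le_of_lt hq hqp
  have hpbar0 : 0 ≤ pbar := le_trans hp0.le hppbar
  have hPb : ∀ v w : Fin n, v ≠ w → 0 ≤ P v w ∧ P v w ≤ pbar := by
    intro v w hvw
    by_cases hs : sameSide n v w
    · obtain ⟨ha, hb⟩ := hin v w hvw hs
      exact ⟨le_trans hp0.le ha, hb⟩
    · rw [hout v w hs]; exact ⟨hq, le_trans hqp.le hppbar⟩
  set y := (n:ℝ) * pbar with hy'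
  set L := Real.log (n / δ) with hL'
  have hm1 : (1:ℝ) ≤ n := by exact_mod_cast Nat.one_le_of_lt h2
  have hnR : (0:ℝ) < n := by linarith
  have hL : 0 < L := Real.log_pos ((one_lt_div hδ).2 (lt_of_lt_of_le hδ1 hm1))
  have hy : 0 ≤ y := mul_nonneg (by positivity) hpbar0
  set k := ⌈9 * y + L⌉₊ with hk'
  set Bad : Fin n → Set (SimpleGraph (Fin n)) :=
    fun v => {G | k ≤ (Finset.univ.filter fun w => G.Adj v w).card} with hBad
  have hBadv : ∀ v, μ.toMeasure (Bad v) ≤ ENNReal.ofReal (δ / n) := by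
    intro v
    have hcov : Bad v ⊆ ⋃ S ∈ Finset.powersetCard k (Finset.univ.erase v),
        {G : SimpleGraph (Fin n) |
          ∀ e ∈ S.image (fun w => if v < w then (v, w) else (w, v)), G.Adj e.1 e.2} := by
      intro G hG
      obtain ⟨S, hSsub, hScard⟩ := Finset.exists_subset_card_eq hG
      refine Set.mem_iUnion₂.2 ⟨S, ?_, ?_⟩
      · refine Finset.mem_powersetCard.2 ⟨?_, hScard⟩
        intro w hw
        have hadj : G.Adj v w := (Finset.mem_filter.1 (hSsub hw)).2
        exact Finset.mem_erase.2 ⟨hadj.ne', Finset.mem_univ w⟩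
      · intro e he
        obtain ⟨w, hwS, rfl⟩ := Finset.mem_image.1 he
        have hadj : G.Adj v w := (Finset.mem_filter.1 (hSsub hwS)).2
        by_cases hvw : v < w
        · simpa [hvw] using hadj
        · simp only [if_neg hvw]; exact hadj.symm
    have hboundS : ∀ S ∈ Finset.powersetCard k (Finset.univ.erase v),
        μ.toMeasure {G : SimpleGraph (Fin n) |
          ∀ e ∈ S.image (fun w => if v < w then (v, w) else (w, v)), G.Adj e.1 e.2}
        ≤ ENNReal.ofReal pbar ^ k := by
      intro S hS
      obtain ⟨hSsub, hScard⟩ := Finset.mem_powersetCard.1 hS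
      have hne : ∀ w ∈ S, w ≠ v := fun w hw => Finset.ne_of_mem_erase (hSsub hw)
      set T := S.image (fun w => if v < w then (v, w) else (w, v)) with hT'
      have hTlt : ∀ e ∈ T, e.1 < e.2 := by
        intro e he
        obtain ⟨w, hwS, rfl⟩ := Finset.mem_image.1 he
        by_cases hvw : v < w
        · simpa [hvw] using hvw
        · have hlt : w < v := lt_of_le_of_ne (not_lt.1 hvw) (hne w hwS)
          simpa [hvw] using hlt
      rw [RowAux.cyl_measure P μ hEP
        (fun e he => ⟨(hPb _ _ (ne_of_lt he)).1,
          le_trans (hPb _ _ (ne_of_lt he)).2 hpbar1⟩) T hTlt]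
      have hinj : Set.InjOn (fun w => if v < w then (v, w) else (w, v)) S := by
        intro w1 h1 w2 h2 heq
        have h1v := hne w1 (by simpa using h1)
        have h2v := hne w2 (by simpa using h2)
        dsimp only at heq
        split_ifs at heq <;> simp_all [Prod.ext_iff]
      have hcard : T.card = k := by
        rw [hT', Finset.card_image_of_injOn hinj, hScard]
      calc ∏ e ∈ T, ENNReal.ofReal (P e.1 e.2)
          ≤ ∏ e ∈ T, ENNReal.ofReal pbar :=
            Finset.prod_le_prod' fun e he =>
              ENNReal.ofReal_le_ofReal (hPb _ _ (ne_of_lt (hTlt e he))).2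
        _ = ENNReal.ofReal pbar ^ k := by rw [Finset.prod_const, hcard]
    calc μ.toMeasure (Bad v)
        ≤ ∑ S ∈ Finset.powersetCard k (Finset.univ.erase v),
          μ.toMeasure {G : SimpleGraph (Fin n) |
            ∀ e ∈ S.image (fun w => if v < w then (v, w) else (w, v)), G.Adj e.1 e.2} :=
          le_trans (measure_mono hcov) (measure_biUnion_finset_le _ _)
      _ ≤ ∑ _S ∈ Finset.powersetCard k (Finset.univ.erase v), ENNReal.ofReal pbar ^ k :=
          Finset.sum_le_sum hboundS
      _ = ((n-1).choose k) • (ENNReal.ofReal pbar ^ k) := by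
          rw [Finset.sum_const, Finset.card_powersetCard,
            Finset.card_erase_of_mem (Finset.mem_univ v), Finset.card_univ, Fintype.card_fin]
      _ ≤ ENNReal.ofReal (δ / n) := by
          rw [nsmul_eq_mul, ← ENNReal.ofReal_pow hpbar0,
            ← ENNReal.ofReal_natCast ((n-1).choose k),
            ← ENNReal.ofReal_mul (by positivity)]
          exact ENNReal.ofReal_le_ofReal
            (RowAux.tail_real n pbar δ h2 hpbar0 hδ hδ1)
  have hBadUnion : μ.toMeasure (⋃ v, Bad v) ≤ ENNReal.ofReal δ := by
    calc μ.toMeasure (⋃ v, Bad v) ≤ ∑' v, μ.toMeasure (Bad v) := measure_iUnion_le _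
      _ = ∑ v, μ.toMeasure (Bad v) := tsum_fintype _
      _ ≤ ∑ _v : Fin n, ENNReal.ofReal (δ / n) := Finset.sum_le_sum fun v _ => hBadv v
      _ = n • ENNReal.ofReal (δ / n) := by
          rw [Finset.sum_const, Finset.card_univ, Fintype.card_fin]
      _ = ENNReal.ofReal δ := by
          rw [nsmul_eq_mul, ← ENNReal.ofReal_natCast n, ← ENNReal.ofReal_mul (by positivity)]
          congr 1
          field_simp
  have hGood : (⋃ v, Bad v)ᶜ ⊆ {G : SimpleGraph (Fin n) |
      ∀ v : Fin n,
        (∑ w, |adjM G v w - offP P v w|) ≤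
          20 * ((n : ℝ) * pbar + Real.sqrt ((n : ℝ) * pbar * Real.log (n / δ)) +
            Real.log (n / δ)) ∧
        (∑ w, |lap G v w - expLap P v w|) ≤
          20 * ((n : ℝ) * pbar + Real.sqrt ((n : ℝ) * pbar * Real.log (n / δ)) +
            Real.log (n / δ))} := by
    intro G hG v
    have hNv : ¬ k ≤ (Finset.univ.filter fun w => G.Adj v w).card := by
      intro h
      exact hG (Set.mem_iUnion.2 ⟨v, h⟩)
    set N := (Finset.univ.filter fun w => G.Adj v w).card with hN'
    have hNle : (N:ℝ) ≤ 9 * y + L := by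
      have h1 : N + 1 ≤ k := not_le.1 hNv
      have h2' : (k:ℝ) < 9*y + L + 1 := Nat.ceil_lt_add_one (by linarith)
      have h3 : (N:ℝ) + 1 ≤ k := by exact_mod_cast h1
      linarith
    have hA0 : ∀ w, 0 ≤ adjM G v w := by
      intro w
      by_cases h : G.Adj v w <;> simp [adjM, h]
    have hOb : ∀ w, 0 ≤ offP P v w ∧ offP P v w ≤ pbar := by
      intro w
      by_cases hvw : v = w
      · simp [offP, hvw, hpbar0]
      · simpa [offP, hvw] using hPb v w hvw
    have hrow : ∀ w, |adjM G v w - offP P v w| ≤ adjM G v w + offP P v w := by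
      intro w
      have := (hOb w).1
      have := hA0 w
      rw [abs_le]
      constructor <;> linarith
    have hA : ∑ w, adjM G v w = (N:ℝ) := by
      rw [hN']
      simp [adjM, Finset.sum_boole]
    have hO : ∑ w, offP P v w ≤ y := by
      calc ∑ w, offP P v w ≤ ∑ _w : Fin n, pbar := Finset.sum_le_sum fun w _ => (hOb w).2
        _ = n * pbar := by
            rw [Finset.sum_const, Finset.card_univ, Fintype.card_fin, nsmul_eq_mul]
    have hadj : ∑ w, |adjM G v w - offP P v w| ≤ (N:ℝ) + y := by
      calc ∑ w, |adjM G v w - offP P v w|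
          ≤ ∑ w, (adjM G v w + offP P v w) := Finset.sum_le_sum fun w _ => hrow w
        _ = (∑ w, adjM G v w) + ∑ w, offP P v w := Finset.sum_add_distrib
        _ ≤ (N:ℝ) + y := by rw [hA]; linarith
    have hsqrt : 0 ≤ Real.sqrt (y * L) := Real.sqrt_nonneg _
    have hadj2 : ∑ w, |adjM G v w - offP P v w| ≤ 10 * y + L := by linarith
    constructor
    · calc ∑ w, |adjM G v w - offP P v w| ≤ 10 * y + L := hadj2
        _ ≤ 20 * (y + Real.sqrt (y * L) + L) := by linarith
    · have hdiag : adjM G v v = 0 := by simp [adjM]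
      have hdiagP : offP P v v = 0 := by simp [offP]
      have hterm : ∀ w, lap G v w - expLap P v w =
          (if v = w then (∑ u, adjM G v u) - (∑ u, offP P v u) else 0)
            - (adjM G v w - offP P v w) := by
        intro w
        simp only [lap, expLap, wlap, Matrix.sub_apply, Matrix.diagonal_apply]
        split_ifs <;> ring
      have e1 : |lap G v v - expLap P v v| ≤ ∑ w, |adjM G v w - offP P v w| := by
        rw [hterm v, if_pos rfl]
        have hrewrite : (∑ u, adjM G v u) - (∑ u, offP P v u) - (adjM G v v - offP P v v)
            = ∑ u, (adjM G v u - offP P v u) := by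
          rw [hdiag, hdiagP, Finset.sum_sub_distrib]
          ring
        rw [hrewrite]
        exact Finset.abs_sum_le_sum_abs _ _
      have e2 : ∑ w ∈ Finset.univ.erase v, |lap G v w - expLap P v w|
          ≤ ∑ w, |adjM G v w - offP P v w| := by
        refine le_trans (le_of_eq (Finset.sum_congr rfl fun w hw => ?_))
          (Finset.sum_le_sum_of_subset_of_nonneg (Finset.subset_univ _)
            (fun w _ _ => abs_nonneg _))
        rw [hterm w, if_neg (Ne.symm (Finset.ne_of_mem_erase hw)), zero_sub, abs_neg]
      have hsplit : ∑ w, |lap G v w - expLap P v w|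
          = |lap G v v - expLap P v v| +
            ∑ w ∈ Finset.univ.erase v, |lap G v w - expLap P v w| :=
        (Finset.add_sum_erase Finset.univ _ (Finset.mem_univ v)).symm
      calc ∑ w, |lap G v w - expLap P v w|
          ≤ 2 * ∑ w, |adjM G v w - offP P v w| := by rw [hsplit]; linarith
        _ ≤ 2 * (10 * y + L) := by linarith
        _ ≤ 20 * (y + Real.sqrt (y * L) + L) := by linarith
  have hmeasBad : MeasurableSet (⋃ v, Bad v) := trivial
  refine le_trans ?_ (measure_mono hGood)
  rw [prob_compl_eq_one_sub hmeasBad]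
  exact tsub_le_tsub_left hBadUnion 1


end
end

section
/- In the nested block example, let P be the diagonal matrix with P[v,v] = p_{vv} (the expected self-loop weights of A★), and let 𝓛★_nl be the symmetric normalized Laplacian of the weighted graph with adjacency matrix A★ − P. Then ‖𝓛★ − 𝓛★_nl‖_op ≤ 6K/(n − 2). -/
open Matrix MeasureTheory
open scoped BigOperators ENNReal Classical

noncomputable section

variable {n : ℕ}

/-- Membership in `L₁ = {1, …, n/4}`. -/
def inL1 (n : ℕ) (v : Fin n) : Prop := (v : ℕ) < n / 4

/-- Membership in `L₂ = {n/4+1, …, n/2}`. -/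
def inL2 (n : ℕ) (v : Fin n) : Prop := n / 4 ≤ (v : ℕ) ∧ (v : ℕ) < n / 2

/-- Expected (weighted) adjacency matrix of the nested block example, diagonal included. -/
def nestedA (n : ℕ) (p q K : ℝ) : Matrix (Fin n) (Fin n) ℝ :=
  Matrix.of fun v w =>
    if (inL1 n v ∧ inL1 n w) ∨ (inL2 n v ∧ inL2 n w) then K * p
    else if inP1 n v ∧ inP1 n w then p
    else if ¬ inP1 n v ∧ ¬ inP1 n w then p
    else q

/-- Symmetric normalized Laplacian of a weighted adjacency matrix `M`, with degree
matrix `D_M = diag(M · 1)`. -/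
def symLapW (M : Matrix (Fin n) (Fin n) ℝ) : Matrix (Fin n) (Fin n) ℝ :=
  1 - Matrix.diagonal (fun v => 1 / Real.sqrt (∑ w, M v w)) * M *
      Matrix.diagonal (fun v => 1 / Real.sqrt (∑ w, M v w))


/-! ### Auxiliary lemmas for `normalized_laplacian_selfloop_removal` -/

/-- Schur-type bound: the ℓ2 operator norm is at most the max absolute row/column sum. -/
lemma aux_opNorm_le_rowsum {n : ℕ} (A : Matrix (Fin n) (Fin n) ℝ) (R : ℝ) (hR : 0 ≤ R)
    (hrow : ∀ v, ∑ w, |A v w| ≤ R) (hcol : ∀ w, ∑ v, |A v w| ≤ R) : opNorm A ≤ R := by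
  apply ContinuousLinearMap.opNorm_le_bound _ hR
  intro x
  have hx : ∀ y : EuclideanSpace ℝ (Fin n), ‖y‖ = Real.sqrt (∑ i, (y i)^2) := by
    intro y; rw [EuclideanSpace.norm_eq]
    simp only [Real.norm_eq_abs, sq_abs]
  rw [hx, hx]
  have key : ∑ i, ((LinearMap.toContinuousLinearMap (Matrix.toEuclideanLin A)) x i)^2
      ≤ R^2 * ∑ i, (x i)^2 := by
    have happ : ∀ i, (LinearMap.toContinuousLinearMap (Matrix.toEuclideanLin A)) x i
        = ∑ w, A i w * x w := by
      intro i; rfl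
    calc ∑ i, ((LinearMap.toContinuousLinearMap (Matrix.toEuclideanLin A)) x i)^2
        = ∑ i, (∑ w, A i w * x w)^2 := by simp_rw [happ]
      _ ≤ ∑ i, (∑ w, |A i w| * |x w|)^2 := by
          apply Finset.sum_le_sum; intro i _
          have h1 : |∑ w, A i w * x w| ≤ ∑ w, |A i w| * |x w| := by
            refine (Finset.abs_sum_le_sum_abs _ _).trans ?_
            apply le_of_eq; congr 1; ext w; exact abs_mul _ _
          calc (∑ w, A i w * x w)^2 = |∑ w, A i w * x w|^2 := (sq_abs _).symm
            _ ≤ (∑ w, |A i w| * |x w|)^2 := by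
                apply pow_le_pow_left₀ (abs_nonneg _) h1 2
      _ ≤ ∑ i, (∑ w, |A i w|) * (∑ w, |A i w| * (x w)^2) := by
          apply Finset.sum_le_sum; intro i _
          apply Finset.sum_sq_le_sum_mul_sum_of_sq_eq_mul
          · intro w _; exact abs_nonneg _
          · intro w _; positivity
          · intro w _; rw [mul_pow, sq_abs (x w)]; ring
      _ ≤ ∑ i, R * (∑ w, |A i w| * (x w)^2) := by
          apply Finset.sum_le_sum; intro i _
          apply mul_le_mul_of_nonneg_right (hrow i)
          positivity
      _ = R * ∑ w, (∑ i, |A i w|) * (x w)^2 := by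
          rw [← Finset.mul_sum]; congr 1
          rw [Finset.sum_comm]; congr 1; ext w; rw [Finset.sum_mul]
      _ ≤ R * ∑ w, R * (x w)^2 := by
          apply mul_le_mul_of_nonneg_left _ hR
          apply Finset.sum_le_sum; intro w _
          exact mul_le_mul_of_nonneg_right (hcol w) (sq_nonneg _)
      _ = R^2 * ∑ i, (x i)^2 := by rw [← Finset.mul_sum]; ring
  calc Real.sqrt (∑ i, ((LinearMap.toContinuousLinearMap (Matrix.toEuclideanLin A)) x i)^2)
      ≤ Real.sqrt (R^2 * ∑ i, (x i)^2) := Real.sqrt_le_sqrt key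
    _ = R * Real.sqrt (∑ i, (x i)^2) := by
        rw [Real.sqrt_mul (sq_nonneg R), Real.sqrt_sq hR]

/-- Key bound on the cross (mixed square-root) term. -/
lemma aux_cross_bound (a b c d t : ℝ) (ha : 0 < a) (hb : 0 < b) (hac : a ≤ c) (hbd : b ≤ d)
    (ht : 0 ≤ t) (hta : t ≤ a) (htb : t ≤ b) :
    t * (1 / (Real.sqrt a * Real.sqrt b) - 1 / (Real.sqrt c * Real.sqrt d))
      ≤ (c - a) / (2 * a) + (d - b) / (2 * b) := by
  have hc : 0 < c := lt_of_lt_of_le ha hac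
  have hd : 0 < d := lt_of_lt_of_le hb hbd
  set sa := Real.sqrt a with hsa
  set sb := Real.sqrt b with hsb
  set sc := Real.sqrt c with hsc
  set sd := Real.sqrt d with hsd
  set st := Real.sqrt t with hst
  have hsa0 : 0 < sa := Real.sqrt_pos.mpr ha
  have hsb0 : 0 < sb := Real.sqrt_pos.mpr hb
  have hsc0 : 0 < sc := Real.sqrt_pos.mpr hc
  have hsd0 : 0 < sd := Real.sqrt_pos.mpr hd
  have hst0 : 0 ≤ st := Real.sqrt_nonneg t
  have hsa2 : sa^2 = a := Real.sq_sqrt ha.le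
  have hsb2 : sb^2 = b := Real.sq_sqrt hb.le
  have hsc2 : sc^2 = c := Real.sq_sqrt hc.le
  have hsd2 : sd^2 = d := Real.sq_sqrt hd.le
  have hst2 : st^2 = t := Real.sq_sqrt ht
  have hsac : sa ≤ sc := Real.sqrt_le_sqrt hac
  have hsbd : sb ≤ sd := Real.sqrt_le_sqrt hbd
  have hsta : st ≤ sa := Real.sqrt_le_sqrt hta
  have hstb : st ≤ sb := Real.sqrt_le_sqrt htb
  have hsplit : 1 / (sa * sb) - 1 / (sc * sd)
      = (1/sa - 1/sc) * (1/sb) + (1/sb - 1/sd) * (1/sc) := by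
    field_simp
    ring
  rw [hsplit, mul_add]
  have hA : t * ((1/sa - 1/sc) * (1/sb)) ≤ (c - a) / (2 * a) := by
    have h1 : t * (1/sb) ≤ st := by
      rw [← hst2]
      rw [div_eq_mul_inv, one_mul]
      calc st^2 * sb⁻¹ = st * (st * sb⁻¹) := by ring
        _ ≤ st * 1 := by
            apply mul_le_mul_of_nonneg_left _ hst0
            rw [mul_inv_le_iff₀ hsb0, one_mul]; exact hstb
        _ = st := mul_one st
    have h2 : 0 ≤ 1/sa - 1/sc := by
      have := one_div_le_one_div_of_le hsa0 hsac
      linarith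
    have h3 : t * ((1/sa - 1/sc) * (1/sb)) = (t * (1/sb)) * (1/sa - 1/sc) := by ring
    rw [h3]
    calc (t * (1/sb)) * (1/sa - 1/sc) ≤ sa * (1/sa - 1/sc) := by
          apply mul_le_mul_of_nonneg_right (h1.trans hsta) h2
      _ = 1 - sa/sc := by field_simp
      _ = (sc - sa) * (sc + sa) / (sc * (sc + sa)) := by
          rw [mul_div_mul_right _ _ (by positivity)]
          field_simp
      _ = (c - a) / (sc * (sc + sa)) := by rw [← hsc2, ← hsa2]; ring_nf
      _ ≤ (c - a) / (2 * a) := by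
          apply div_le_div_of_nonneg_left (by linarith) (by positivity)
          nlinarith [hsa2, hsc2]
  have hB : t * ((1/sb - 1/sd) * (1/sc)) ≤ (d - b) / (2 * b) := by
    have h1 : t * (1/sc) ≤ st := by
      rw [← hst2, div_eq_mul_inv, one_mul]
      calc st^2 * sc⁻¹ = st * (st * sc⁻¹) := by ring
        _ ≤ st * 1 := by
            apply mul_le_mul_of_nonneg_left _ hst0
            rw [mul_inv_le_iff₀ hsc0, one_mul]; exact hsta.trans hsac
        _ = st := mul_one st
    have h2 : 0 ≤ 1/sb - 1/sd := by
      have := one_div_le_one_div_of_le hsb0 hsbd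
      linarith
    have h3 : t * ((1/sb - 1/sd) * (1/sc)) = (t * (1/sc)) * (1/sb - 1/sd) := by ring
    rw [h3]
    calc (t * (1/sc)) * (1/sb - 1/sd) ≤ sb * (1/sb - 1/sd) := by
          apply mul_le_mul_of_nonneg_right (h1.trans hstb) h2
      _ = 1 - sb/sd := by field_simp
      _ = (sd - sb) * (sd + sb) / (sd * (sd + sb)) := by
          rw [mul_div_mul_right _ _ (by positivity)]
          field_simp
      _ = (d - b) / (sd * (sd + sb)) := by rw [← hsd2, ← hsb2]; ring_nf
      _ ≤ (d - b) / (2 * b) := by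
          apply div_le_div_of_nonneg_left (by linarith) (by positivity)
          nlinarith [hsb2, hsd2]
  linarith


lemma aux_b1 (p q K ν : ℝ) (hq0 : 0 < q) (hK : 1 ≤ K)
    (hp : 0 < p) (hK0 : (0:ℝ) < K) (hν0 : (0:ℝ) < ν)
    (hdLpos : 0 < ν * (K * p) + ν * p + 2 * ν * q)
    (hndenom : (0:ℝ) < 4 * ν - 2) :
    K * p / (ν * (K * p) + ν * p + 2 * ν * q) ≤ 2 * K / (4 * ν - 2) := by
  rw [div_le_div_iff₀ hdLpos hndenom]
  nlinarith [mul_nonneg (mul_pos hK0 hp).le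
      (by nlinarith [mul_le_mul_of_nonneg_left hK hν0.le] : (0:ℝ) ≤ ν * K - ν),
    mul_nonneg (mul_nonneg hK0.le hν0.le) hq0.le, mul_pos hK0 hp]

lemma aux_b1' (p q K ν : ℝ) (hq0 : 0 < q) (hK : 1 ≤ K)
    (hp : 0 < p) (hK0 : (0:ℝ) < K) (hν0 : (0:ℝ) < ν)
    (hdRpos : 0 < 2 * ν * p + 2 * ν * q)
    (hndenom : (0:ℝ) < 4 * ν - 2) :
    p / (2 * ν * p + 2 * ν * q) ≤ 2 * K / (4 * ν - 2) := by
  rw [div_le_div_iff₀ hdRpos hndenom]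
  nlinarith [mul_nonneg (sub_nonneg.mpr hK) (mul_nonneg hν0.le hp.le),
    mul_nonneg (mul_nonneg hK0.le hν0.le) hq0.le]

lemma aux_b2 (p q K ν : ℝ) (hq0 : 0 < q) (hK : 1 ≤ K) (hν1 : 1 ≤ ν)
    (hp : 0 < p) (hK0 : (0:ℝ) < K) (hν0 : (0:ℝ) < ν)
    (hd'Lpos : 0 < ν * (K * p) + ν * p + 2 * ν * q - K * p)
    (hndenom : (0:ℝ) < 4 * ν - 2) :
    K * p / (2 * (ν * (K * p) + ν * p + 2 * ν * q - K * p)) ≤ K / (4 * ν - 2) := by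
  rw [div_le_div_iff₀ (by linarith) hndenom]
  nlinarith [mul_nonneg (mul_nonneg (mul_nonneg (sub_nonneg.mpr hν1) (sub_nonneg.mpr hK)) hp.le) hK0.le,
    mul_nonneg (mul_nonneg hK0.le hν0.le) hq0.le, mul_pos hK0 hp,
    mul_nonneg (mul_nonneg (sub_nonneg.mpr hν1) (sub_nonneg.mpr hK)) hp.le]

lemma aux_b3 (p q ν : ℝ) (hq0 : 0 < q)
    (hp : 0 < p) (hν0 : (0:ℝ) < ν)
    (hd'Rpos : 0 < 2 * ν * p + 2 * ν * q - p)
    (hndenom : (0:ℝ) < 4 * ν - 2) :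
    p / (2 * (2 * ν * p + 2 * ν * q - p)) ≤ 1 / (4 * ν - 2) := by
  rw [div_le_div_iff₀ (by linarith) hndenom]
  nlinarith [mul_nonneg hν0.le hq0.le]

lemma aux_b4 (K ν : ℝ) (hK : 1 ≤ K) (hndenom : (0:ℝ) < 4 * ν - 2) :
    2 * K / (4 * ν - 2) + 2 * K / (4 * ν - 2) + (K / (4 * ν - 2) + 1 / (4 * ν - 2))
      ≤ 6 * K / (4 * ν - 2) := by
  have h : 2 * K / (4 * ν - 2) + 2 * K / (4 * ν - 2) + (K / (4 * ν - 2) + 1 / (4 * ν - 2))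
      = (5 * K + 1) / (4 * ν - 2) := by ring
  rw [h, div_le_div_iff₀ hndenom hndenom]
  nlinarith [mul_nonneg (sub_nonneg.mpr hK) hndenom.le]

set_option maxHeartbeats 4000000 in
/-- **Lemma (removing the expected self-loops barely changes `𝓛⋆`).**
For the nested block example, let `𝓛⋆` be the symmetric normalized Laplacian of `A⋆`
(self-loops included) and `𝓛⋆_nl` that of `A⋆ - P`, where `P` is the diagonal of `A⋆`.
Then `‖𝓛⋆ - 𝓛⋆_nl‖_op ≤ 6K/(n-2)`. -/
theorem normalized_laplacian_selfloop_removal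
    (n : ℕ) (hn4 : 4 ∣ n) (hn0 : 0 < n)
    (p q K : ℝ) (hq0 : 0 < q) (hqp : q < p) (hK : 1 ≤ K) :
    opNorm (symLapW (nestedA n p q K) -
        symLapW (Matrix.of fun v w => if v = w then 0 else nestedA n p q K v w)) ≤
      6 * K / ((n : ℝ) - 2) := by
  -- Setup
  obtain ⟨N, hn⟩ := hn4
  have hN1 : 1 ≤ N := by omega
  have h4 : n / 4 = N := by omega
  have h2 : n / 2 = 2 * N := by omega
  have hNn : N < n := by omega
  have h2Nn : 2 * N < n := by omega
  have hp : 0 < p := hq0.trans hqp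
  have hK0 : (0:ℝ) < K := lt_of_lt_of_le one_pos hK
  set ν : ℝ := (N : ℝ) with hν
  have hν1 : (1:ℝ) ≤ ν := by rw [hν]; exact_mod_cast hN1
  have hν0 : (0:ℝ) < ν := lt_of_lt_of_le one_pos hν1
  set M : Matrix (Fin n) (Fin n) ℝ := nestedA n p q K with hM
  set M' : Matrix (Fin n) (Fin n) ℝ :=
    Matrix.of fun v w => if v = w then 0 else nestedA n p q K v w with hM'
  set dL : ℝ := ν * (K * p) + ν * p + 2 * ν * q with hdL
  set dR : ℝ := 2 * ν * p + 2 * ν * q with hdR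
  have hdLpos : 0 < dL := by
    rw [hdL]; nlinarith [mul_pos hν0 (mul_pos hK0 hp), mul_pos hν0 hp, mul_pos hν0 hq0]
  have hdRpos : 0 < dR := by rw [hdR]; nlinarith [mul_pos hν0 hp, mul_pos hν0 hq0]
  have hd'Lpos : 0 < dL - K * p := by rw [hdL]; nlinarith [mul_nonneg (sub_nonneg.mpr hν1) (mul_pos hK0 hp).le]
  have hd'Rpos : 0 < dR - p := by
    rw [hdR]; nlinarith [mul_pos hν0 hq0, mul_le_mul_of_nonneg_right hν1 hp.le]
  have hd'LleL : dL - K * p ≤ dL := by nlinarith [mul_pos hK0 hp]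
  have hd'RleR : dR - p ≤ dR := by linarith
  have h2νq : 0 ≤ 2 * ν * q := by positivity
  have ht'L : 2 * ν * q ≤ dL - K * p := by
    rw [hdL]
    nlinarith [mul_nonneg (sub_nonneg.mpr hν1) (mul_pos hK0 hp).le, mul_pos hν0 hp]
  have ht'R : 2 * ν * q ≤ dR - p := by
    rw [hdR]; nlinarith [mul_le_mul_of_nonneg_right hν1 hp.le]
  -- classification of vertices into three types
  have htypes : ∀ v : Fin n,
      (inL1 n v ∧ ¬ inL2 n v ∧ inP1 n v) ∨ (¬ inL1 n v ∧ inL2 n v ∧ inP1 n v) ∨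
      (¬ inL1 n v ∧ ¬ inL2 n v ∧ ¬ inP1 n v) := by
    intro v; unfold inL1 inL2 inP1; omega
  -- entry values
  have hMcross : ∀ v w : Fin n, inP1 n v → ¬ inP1 n w → M v w = q := by
    intro v w hv hw
    have hw1 : ¬ inL1 n w := fun h => hw (by unfold inL1 at h; unfold inP1; omega)
    have hw2 : ¬ inL2 n w := fun h => hw (by unfold inL2 at h; unfold inP1; omega)
    simp [hM, nestedA, hw1, hw2, hv, hw]
  have hMcross' : ∀ v w : Fin n, ¬ inP1 n v → inP1 n w → M v w = q := by
    intro v w hv hw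
    have hv1 : ¬ inL1 n v := fun h => hv (by unfold inL1 at h; unfold inP1; omega)
    have hv2 : ¬ inL2 n v := fun h => hv (by unfold inL2 at h; unfold inP1; omega)
    simp [hM, nestedA, hv1, hv2, hv, hw]
  have hMvv : ∀ v : Fin n, M v v = if inP1 n v then K * p else p := by
    intro v
    rcases htypes v with ⟨h1, h2, h3⟩ | ⟨h1, h2, h3⟩ | ⟨h1, h2, h3⟩ <;>
      simp [hM, nestedA, h1, h2, h3]
  have hMsymm : ∀ v w : Fin n, M v w = M w v := by
    intro v w
    rcases htypes v with ⟨h1, h2, h3⟩ | ⟨h1, h2, h3⟩ | ⟨h1, h2, h3⟩ <;>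
      rcases htypes w with ⟨g1, g2, g3⟩ | ⟨g1, g2, g3⟩ | ⟨g1, g2, g3⟩ <;>
      simp [hM, nestedA, h1, h2, h3, g1, g2, g3]
  have hMnn : ∀ v w : Fin n, 0 ≤ M v w := by
    intro v w
    simp only [hM, nestedA, Matrix.of_apply]
    split_ifs <;> positivity
  have hM'symm : ∀ v w : Fin n, M' v w = M' w v := by
    intro v w
    by_cases h : v = w
    · rw [h]
    · simp only [hM', Matrix.of_apply, if_neg h, if_neg (Ne.symm h)]
      exact hMsymm v w
  -- the three blocks
  set A1 : Finset (Fin n) := Finset.univ.filter (fun w => inL1 n w) with hA1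
  set A2 : Finset (Fin n) := Finset.univ.filter (fun w => inL2 n w) with hA2
  set A3 : Finset (Fin n) := Finset.univ.filter (fun w => ¬ inP1 n w) with hA3
  have hA1card : A1.card = N := by
    have : A1 = Finset.Iio (⟨N, hNn⟩ : Fin n) := by
      ext w; simp [hA1, inL1, Finset.mem_Iio, Fin.lt_def, h4]
    rw [this, Fin.card_Iio]
  have hA2card : A2.card = N := by
    have h : A2 = Finset.Iio (⟨2 * N, h2Nn⟩ : Fin n) \ Finset.Iio (⟨N, hNn⟩ : Fin n) := by
      ext w; simp [hA2, inL2, Finset.mem_Iio, Fin.lt_def, h4, h2]; omega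
    have hsub : Finset.Iio (⟨N, hNn⟩ : Fin n) ⊆ Finset.Iio (⟨2 * N, h2Nn⟩ : Fin n) :=
      Finset.Iio_subset_Iio (by rw [Fin.mk_le_mk]; omega)
    rw [h, Finset.card_sdiff_of_subset hsub, Fin.card_Iio, Fin.card_Iio]
    show 2 * N - N = N
    omega
  have hA3card : A3.card = 2 * N := by
    have h : A3 = (Finset.Iio (⟨2 * N, h2Nn⟩ : Fin n))ᶜ := by
      ext w; simp [hA3, inP1, Finset.mem_Iio, Fin.lt_def, h2]
    rw [h, Finset.card_compl, Fin.card_Iio, Fintype.card_fin]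
    show n - 2 * N = 2 * N
    omega
  have hsplitP : Finset.univ.filter (fun w : Fin n => inP1 n w) = A1 ∪ A2 := by
    ext w; simp [hA1, hA2, inP1, inL1, inL2, h4, h2]; omega
  have hdisj : Disjoint A1 A2 := by
    rw [Finset.disjoint_left]
    intro w hw1 hw2
    simp [hA1, inL1, h4] at hw1
    simp [hA2, inL2, h4] at hw2
    omega
  have hfilterA3 : Finset.univ.filter (fun w : Fin n => ¬ inP1 n w) = A3 := by
    ext w; simp [hA3]
  have hnotP : ∀ f : Fin n → ℝ,
      ∑ w, f w = ∑ w ∈ Finset.univ.filter (fun w : Fin n => inP1 n w), f w + ∑ w ∈ A3, f w := by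
    intro f
    rw [← hfilterA3]
    exact (Finset.sum_filter_add_sum_filter_not _ _ f).symm
  -- degree computation
  have hdeg : ∀ v : Fin n, ∑ w, M v w = if inP1 n v then dL else dR := by
    intro v
    have hsum3 : ∑ w, M v w = ∑ w ∈ A1, M v w + ∑ w ∈ A2, M v w + ∑ w ∈ A3, M v w := by
      rw [hnotP (M v), hsplitP, Finset.sum_union hdisj]
    have hw1 : ∀ w ∈ A1, inL1 n w := by intro w hw; simpa [hA1] using hw
    have hw2 : ∀ w ∈ A2, inL2 n w := by intro w hw; simpa [hA2] using hw
    have hw3 : ∀ w ∈ A3, ¬ inP1 n w := by intro w hw; simpa [hA3] using hw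
    have hL1P : ∀ w : Fin n, inL1 n w → inP1 n w := by
      intro w h; unfold inL1 at h; unfold inP1; omega
    have hL2P : ∀ w : Fin n, inL2 n w → inP1 n w := by
      intro w h; unfold inL2 at h; unfold inP1; omega
    have hL12 : ∀ w : Fin n, inL1 n w → ¬ inL2 n w := by
      intro w h; unfold inL1 at h; unfold inL2; omega
    rcases htypes v with ⟨h1, h2, h3⟩ | ⟨h1, h2, h3⟩ | ⟨h1, h2, h3⟩
    · rw [if_pos h3, hsum3]
      have e1 : ∑ w ∈ A1, M v w = ν * (K * p) := by
        rw [Finset.sum_congr rfl (fun w hw => by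
          simp [hM, nestedA, h1, hw1 w hw] : ∀ w ∈ A1, M v w = K * p)]
        rw [Finset.sum_const, hA1card, nsmul_eq_mul]
      have e2 : ∑ w ∈ A2, M v w = ν * p := by
        rw [Finset.sum_congr rfl (fun w hw => by
          have g2 := hw2 w hw
          have g1 : ¬ inL1 n w := fun g => (hL12 w g) g2
          simp [hM, nestedA, h1, h2, h3, g1, g2, hL2P w g2] : ∀ w ∈ A2, M v w = p)]
        rw [Finset.sum_const, hA2card, nsmul_eq_mul]
      have e3 : ∑ w ∈ A3, M v w = 2 * ν * q := by
        rw [Finset.sum_congr rfl (fun w hw => hMcross v w h3 (hw3 w hw))]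
        rw [Finset.sum_const, hA3card, nsmul_eq_mul]
        push_cast; try ring
      rw [e1, e2, e3, hdL]
    · rw [if_pos h3, hsum3]
      have e1 : ∑ w ∈ A1, M v w = ν * p := by
        rw [Finset.sum_congr rfl (fun w hw => by
          have g1 := hw1 w hw
          have g2 : ¬ inL2 n w := hL12 w g1
          simp [hM, nestedA, h1, h2, h3, g1, g2, hL1P w g1] : ∀ w ∈ A1, M v w = p)]
        rw [Finset.sum_const, hA1card, nsmul_eq_mul]
      have e2 : ∑ w ∈ A2, M v w = ν * (K * p) := by
        rw [Finset.sum_congr rfl (fun w hw => by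
          simp [hM, nestedA, h2, hw2 w hw] : ∀ w ∈ A2, M v w = K * p)]
        rw [Finset.sum_const, hA2card, nsmul_eq_mul]
      have e3 : ∑ w ∈ A3, M v w = 2 * ν * q := by
        rw [Finset.sum_congr rfl (fun w hw => hMcross v w h3 (hw3 w hw))]
        rw [Finset.sum_const, hA3card, nsmul_eq_mul]
        push_cast; try ring
      rw [e1, e2, e3, hdL]; ring
    · rw [if_neg h3, hsum3]
      have e1 : ∑ w ∈ A1, M v w = ν * q := by
        rw [Finset.sum_congr rfl (fun w hw => hMcross' v w h3 (hL1P w (hw1 w hw)))]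
        rw [Finset.sum_const, hA1card, nsmul_eq_mul]
      have e2 : ∑ w ∈ A2, M v w = ν * q := by
        rw [Finset.sum_congr rfl (fun w hw => hMcross' v w h3 (hL2P w (hw2 w hw)))]
        rw [Finset.sum_const, hA2card, nsmul_eq_mul]
      have e3 : ∑ w ∈ A3, M v w = 2 * ν * p := by
        rw [Finset.sum_congr rfl (fun w hw => by
          have g3 := hw3 w hw
          have g1 : ¬ inL1 n w := fun g => g3 (hL1P w g)
          have g2 : ¬ inL2 n w := fun g => g3 (hL2P w g)
          simp [hM, nestedA, h1, h2, h3, g1, g2, g3] : ∀ w ∈ A3, M v w = p)]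
        rw [Finset.sum_const, hA3card, nsmul_eq_mul]
        push_cast; try ring
      rw [e1, e2, e3, hdR]; ring
  have hdeg' : ∀ v : Fin n, ∑ w, M' v w = if inP1 n v then dL - K * p else dR - p := by
    intro v
    have hsub : ∑ w, M' v w = (∑ w, M v w) - M v v := by
      have h1 : ∑ w, M' v w = ∑ w ∈ Finset.univ.erase v, M' v w :=
        (Finset.sum_erase _ (by simp [hM'])).symm
      have h2' : ∑ w ∈ Finset.univ.erase v, M' v w = ∑ w ∈ Finset.univ.erase v, M v w := by
        apply Finset.sum_congr rfl
        intro w hw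
        have : w ≠ v := Finset.ne_of_mem_erase hw
        simp [hM', hM, if_neg (Ne.symm this)]
      rw [h1, h2', Finset.sum_erase_eq_sub (Finset.mem_univ v)]
    rw [hsub, hdeg v, hMvv v]
    split_ifs <;> ring
  -- entry formula for the difference of the two normalized Laplacians
  set E : Matrix (Fin n) (Fin n) ℝ := symLapW M - symLapW M' with hE
  have hEentry : ∀ v w : Fin n, E v w =
      (1 / Real.sqrt (∑ u, M' v u)) * M' v w * (1 / Real.sqrt (∑ u, M' w u)) -
      (1 / Real.sqrt (∑ u, M v u)) * M v w * (1 / Real.sqrt (∑ u, M w u)) := by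
    intro v w
    simp only [hE, symLapW, Matrix.sub_apply, Matrix.mul_diagonal,
      Matrix.diagonal_mul, Matrix.one_apply]
    ring
  have hEsymm : ∀ v w : Fin n, E v w = E w v := by
    intro v w
    rw [hEentry v w, hEentry w v, hMsymm v w, hM'symm v w]
    ring
  -- square-root facts
  have sq_dL : Real.sqrt dL * Real.sqrt dL = dL := Real.mul_self_sqrt hdLpos.le
  have sq_dR : Real.sqrt dR * Real.sqrt dR = dR := Real.mul_self_sqrt hdRpos.le
  have sq_d'L : Real.sqrt (dL - K * p) * Real.sqrt (dL - K * p) = dL - K * p :=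
    Real.mul_self_sqrt hd'Lpos.le
  have sq_d'R : Real.sqrt (dR - p) * Real.sqrt (dR - p) = dR - p :=
    Real.mul_self_sqrt hd'Rpos.le
  have hndenom : (0:ℝ) < 4 * ν - 2 := by linarith
  have hncast : (n : ℝ) - 2 = 4 * ν - 2 := by
    rw [hn]; push_cast; try ring
  -- cross-term bound (both orientations give the same bound)
  have hcrossbd : 2 * ν * q * (1 / (Real.sqrt (dL - K * p) * Real.sqrt (dR - p)) -
      1 / (Real.sqrt dL * Real.sqrt dR)) ≤ K * p / (2 * (dL - K * p)) + p / (2 * (dR - p)) := by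
    have h := aux_cross_bound (dL - K * p) (dR - p) dL dR (2 * ν * q) hd'Lpos hd'Rpos
      hd'LleL hd'RleR h2νq ht'L ht'R
    calc 2 * ν * q * (1 / (Real.sqrt (dL - K * p) * Real.sqrt (dR - p)) -
        1 / (Real.sqrt dL * Real.sqrt dR))
        ≤ (dL - (dL - K * p)) / (2 * (dL - K * p)) + (dR - (dR - p)) / (2 * (dR - p)) := h
      _ = K * p / (2 * (dL - K * p)) + p / (2 * (dR - p)) := by ring_nf
  -- final scalar bounds
  have b1 : K * p / dL ≤ 2 * K / (4 * ν - 2) := by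
    rw [hdL]; exact aux_b1 p q K ν hq0 hK hp hK0 hν0 (hdL ▸ hdLpos) hndenom
  have b1' : p / dR ≤ 2 * K / (4 * ν - 2) := by
    rw [hdR]; exact aux_b1' p q K ν hq0 hK hp hK0 hν0 (hdR ▸ hdRpos) hndenom
  have b2 : K * p / (2 * (dL - K * p)) ≤ K / (4 * ν - 2) := by
    rw [hdL]; exact aux_b2 p q K ν hq0 hK hν1 hp hK0 hν0 (hdL ▸ hd'Lpos) hndenom
  have b3 : p / (2 * (dR - p)) ≤ 1 / (4 * ν - 2) := by
    rw [hdR]; exact aux_b3 p q ν hq0 hp hν0 (hdR ▸ hd'Rpos) hndenom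
  have b4 := aux_b4 K ν hK hndenom
  -- row sum bound
  have hrowE : ∀ v : Fin n, ∑ w, |E v w| ≤ 6 * K / (4 * ν - 2) := by
    intro v
    by_cases hv : inP1 n v
    · -- v in the left community
      have hDv : ∑ u, M v u = dL := by rw [hdeg v, if_pos hv]
      have hD'v : ∑ u, M' v u = dL - K * p := by rw [hdeg' v, if_pos hv]
      have hvmem : v ∈ Finset.univ.filter (fun w : Fin n => inP1 n w) := by
        simp [hv]
      have hstep1 : ∑ w, |E v w| =
          ∑ w ∈ Finset.univ.filter (fun w : Fin n => inP1 n w), |E v w| +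
          ∑ w ∈ A3, |E v w| := hnotP (fun w => |E v w|)
      have hstep2 : ∑ w ∈ Finset.univ.filter (fun w : Fin n => inP1 n w), |E v w| =
          |E v v| + ∑ w ∈ (Finset.univ.filter (fun w : Fin n => inP1 n w)).erase v, |E v w| :=
        (Finset.add_sum_erase _ _ hvmem).symm
      -- diagonal entry
      have hdiag : |E v v| = K * p / dL := by
        have : E v v = - (K * p / dL) := by
          rw [hEentry v v, hDv, hMvv v, if_pos hv]
          have hM'vv : M' v v = 0 := by simp [hM']
          rw [hM'vv]
          field_simp
          rw [Real.sq_sqrt hdLpos.le]; ring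
        rw [this, abs_neg, abs_of_nonneg (by positivity)]
      -- same-side off-diagonal entries
      have hinside : ∀ w ∈ (Finset.univ.filter (fun w : Fin n => inP1 n w)).erase v,
          |E v w| = M v w * (1 / (dL - K * p) - 1 / dL) := by
        intro w hw
        have hwv : w ≠ v := Finset.ne_of_mem_erase hw
        have hwP : inP1 n w := by
          have := Finset.mem_of_mem_erase hw
          simpa using this
        have hDw : ∑ u, M w u = dL := by rw [hdeg w, if_pos hwP]
        have hD'w : ∑ u, M' w u = dL - K * p := by rw [hdeg' w, if_pos hwP]
        have hM'vw : M' v w = M v w := by simp [hM', hM, if_neg (Ne.symm hwv)]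
        have hEvw : E v w = M v w * (1 / (dL - K * p) - 1 / dL) := by
          rw [hEentry v w, hDv, hDw, hD'v, hD'w, hM'vw]
          field_simp
          rw [Real.sq_sqrt hdLpos.le, Real.sq_sqrt hd'Lpos.le]
          ring
        rw [hEvw, abs_of_nonneg]
        apply mul_nonneg (hMnn v w)
        have := one_div_le_one_div_of_le hd'Lpos hd'LleL
        linarith
      -- cross entries
      have hcrossE : ∀ w ∈ A3, |E v w| =
          q * (1 / (Real.sqrt (dL - K * p) * Real.sqrt (dR - p)) -
               1 / (Real.sqrt dL * Real.sqrt dR)) := by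
        intro w hw
        have hwR : ¬ inP1 n w := by simpa [hA3] using hw
        have hDw : ∑ u, M w u = dR := by rw [hdeg w, if_neg hwR]
        have hD'w : ∑ u, M' w u = dR - p := by rw [hdeg' w, if_neg hwR]
        have hwv : w ≠ v := fun h => hwR (h ▸ hv)
        have hM'vw : M' v w = q := by
          rw [hM']
          simp only [Matrix.of_apply, if_neg (Ne.symm hwv)]
          exact hMcross v w hv hwR
        have hMvw : M v w = q := hMcross v w hv hwR
        have hEvw : E v w = q * (1 / (Real.sqrt (dL - K * p) * Real.sqrt (dR - p)) -
            1 / (Real.sqrt dL * Real.sqrt dR)) := by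
          rw [hEentry v w, hDv, hDw, hD'v, hD'w, hM'vw, hMvw]
          ring
        rw [hEvw, abs_of_nonneg]
        apply mul_nonneg hq0.le
        have hle : Real.sqrt (dL - K * p) * Real.sqrt (dR - p) ≤ Real.sqrt dL * Real.sqrt dR := by
          apply mul_le_mul (Real.sqrt_le_sqrt hd'LleL) (Real.sqrt_le_sqrt hd'RleR)
            (Real.sqrt_nonneg _) (Real.sqrt_nonneg _)
        have hpos : 0 < Real.sqrt (dL - K * p) * Real.sqrt (dR - p) := by
          apply mul_pos (Real.sqrt_pos.mpr hd'Lpos) (Real.sqrt_pos.mpr hd'Rpos)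
        have := one_div_le_one_div_of_le hpos hle
        linarith
      -- sum of same-side entries
      have hsumM : ∑ w ∈ (Finset.univ.filter (fun w : Fin n => inP1 n w)).erase v, M v w
          = dL - 2 * ν * q - K * p := by
        have htot : ∑ w ∈ Finset.univ.filter (fun w : Fin n => inP1 n w), M v w
            = dL - 2 * ν * q := by
          have hsplit2 := hnotP (M v)
          have hA3sum : ∑ w ∈ A3, M v w = 2 * ν * q := by
            rw [Finset.sum_congr rfl (fun w hw => hMcross v w hv (by simpa [hA3] using hw))]
            rw [Finset.sum_const, hA3card, nsmul_eq_mul]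
            push_cast; try ring
          rw [hdeg v, if_pos hv] at hsplit2
          rw [hA3sum] at hsplit2
          linarith
        rw [Finset.sum_erase_eq_sub hvmem, htot, hMvv v, if_pos hv]
      -- put the row together
      rw [hstep1, hstep2, hdiag]
      rw [Finset.sum_congr rfl hinside, Finset.sum_congr rfl hcrossE]
      rw [← Finset.sum_mul, hsumM, Finset.sum_const, hA3card, nsmul_eq_mul]
      have hterm2 : (dL - 2 * ν * q - K * p) * (1 / (dL - K * p) - 1 / dL) ≤ K * p / dL := by
        have hΔ : 0 ≤ 1 / (dL - K * p) - 1 / dL := by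
          have := one_div_le_one_div_of_le hd'Lpos hd'LleL
          linarith
        have h1 : (dL - 2 * ν * q - K * p) * (1 / (dL - K * p) - 1 / dL)
            ≤ (dL - K * p) * (1 / (dL - K * p) - 1 / dL) := by
          apply mul_le_mul_of_nonneg_right (by linarith) hΔ
        have h2' : (dL - K * p) * (1 / (dL - K * p) - 1 / dL) = K * p / dL := by
          field_simp
          ring
        linarith
      have hterm3 : ((2 * N : ℕ) : ℝ) * (q * (1 / (Real.sqrt (dL - K * p) * Real.sqrt (dR - p))
          - 1 / (Real.sqrt dL * Real.sqrt dR)))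
          ≤ K * p / (2 * (dL - K * p)) + p / (2 * (dR - p)) := by
        have : ((2 * N : ℕ) : ℝ) * (q * (1 / (Real.sqrt (dL - K * p) * Real.sqrt (dR - p))
            - 1 / (Real.sqrt dL * Real.sqrt dR)))
            = 2 * ν * q * (1 / (Real.sqrt (dL - K * p) * Real.sqrt (dR - p))
            - 1 / (Real.sqrt dL * Real.sqrt dR)) := by
          push_cast; try ring
        rw [this]
        exact hcrossbd
      calc K * p / dL + (dL - 2 * ν * q - K * p) * (1 / (dL - K * p) - 1 / dL)
            + ((2 * N : ℕ) : ℝ) * (q * (1 / (Real.sqrt (dL - K * p) * Real.sqrt (dR - p))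
              - 1 / (Real.sqrt dL * Real.sqrt dR)))
          ≤ 2 * K / (4 * ν - 2) + 2 * K / (4 * ν - 2) + (K / (4 * ν - 2) + 1 / (4 * ν - 2)) := by
            have := hterm2.trans b1
            have := hterm3.trans (add_le_add b2 b3)
            linarith [b1]
        _ ≤ 6 * K / (4 * ν - 2) := b4
    · -- v in the right community
      have hDv : ∑ u, M v u = dR := by rw [hdeg v, if_neg hv]
      have hD'v : ∑ u, M' v u = dR - p := by rw [hdeg' v, if_neg hv]
      have hvmem : v ∈ A3 := by simp [hA3, hv]
      have hstep1 : ∑ w, |E v w| =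
          ∑ w ∈ Finset.univ.filter (fun w : Fin n => inP1 n w), |E v w| +
          ∑ w ∈ A3, |E v w| := hnotP (fun w => |E v w|)
      have hstep2 : ∑ w ∈ A3, |E v w| = |E v v| + ∑ w ∈ A3.erase v, |E v w| :=
        (Finset.add_sum_erase _ _ hvmem).symm
      have hdiag : |E v v| = p / dR := by
        have : E v v = - (p / dR) := by
          rw [hEentry v v, hDv, hMvv v, if_neg hv]
          have hM'vv : M' v v = 0 := by simp [hM']
          rw [hM'vv]
          field_simp
          rw [Real.sq_sqrt hdRpos.le]; ring
        rw [this, abs_neg, abs_of_nonneg (by positivity)]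
      have hinside : ∀ w ∈ A3.erase v,
          |E v w| = M v w * (1 / (dR - p) - 1 / dR) := by
        intro w hw
        have hwv : w ≠ v := Finset.ne_of_mem_erase hw
        have hwR : ¬ inP1 n w := by
          have := Finset.mem_of_mem_erase hw
          simpa [hA3] using this
        have hDw : ∑ u, M w u = dR := by rw [hdeg w, if_neg hwR]
        have hD'w : ∑ u, M' w u = dR - p := by rw [hdeg' w, if_neg hwR]
        have hM'vw : M' v w = M v w := by simp [hM', hM, if_neg (Ne.symm hwv)]
        have hEvw : E v w = M v w * (1 / (dR - p) - 1 / dR) := by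
          rw [hEentry v w, hDv, hDw, hD'v, hD'w, hM'vw]
          field_simp
          rw [Real.sq_sqrt hdRpos.le, Real.sq_sqrt hd'Rpos.le]
          ring
        rw [hEvw, abs_of_nonneg]
        apply mul_nonneg (hMnn v w)
        have := one_div_le_one_div_of_le hd'Rpos hd'RleR
        linarith
      have hcrossE : ∀ w ∈ Finset.univ.filter (fun w : Fin n => inP1 n w), |E v w| =
          q * (1 / (Real.sqrt (dL - K * p) * Real.sqrt (dR - p)) -
               1 / (Real.sqrt dL * Real.sqrt dR)) := by
        intro w hw
        have hwP : inP1 n w := by simpa using hw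
        have hDw : ∑ u, M w u = dL := by rw [hdeg w, if_pos hwP]
        have hD'w : ∑ u, M' w u = dL - K * p := by rw [hdeg' w, if_pos hwP]
        have hwv : w ≠ v := fun h => hv (h ▸ hwP)
        have hM'vw : M' v w = q := by
          rw [hM']
          simp only [Matrix.of_apply, if_neg (Ne.symm hwv)]
          exact hMcross' v w hv hwP
        have hMvw : M v w = q := hMcross' v w hv hwP
        have hEvw : E v w = q * (1 / (Real.sqrt (dL - K * p) * Real.sqrt (dR - p)) -
            1 / (Real.sqrt dL * Real.sqrt dR)) := by
          rw [hEentry v w, hDv, hDw, hD'v, hD'w, hM'vw, hMvw]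
          ring
        rw [hEvw, abs_of_nonneg]
        apply mul_nonneg hq0.le
        have hle : Real.sqrt (dL - K * p) * Real.sqrt (dR - p) ≤ Real.sqrt dL * Real.sqrt dR := by
          apply mul_le_mul (Real.sqrt_le_sqrt hd'LleL) (Real.sqrt_le_sqrt hd'RleR)
            (Real.sqrt_nonneg _) (Real.sqrt_nonneg _)
        have hpos : 0 < Real.sqrt (dL - K * p) * Real.sqrt (dR - p) := by
          apply mul_pos (Real.sqrt_pos.mpr hd'Lpos) (Real.sqrt_pos.mpr hd'Rpos)
        have := one_div_le_one_div_of_le hpos hle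
        linarith
      have hsumM : ∑ w ∈ A3.erase v, M v w = dR - 2 * ν * q - p := by
        have htot : ∑ w ∈ A3, M v w = dR - 2 * ν * q := by
          have hsplit2 := hnotP (M v)
          have hPsum : ∑ w ∈ Finset.univ.filter (fun w : Fin n => inP1 n w), M v w
              = 2 * ν * q := by
            rw [Finset.sum_congr rfl (fun w hw => hMcross' v w hv (by simpa using hw))]
            have hPcard : (Finset.univ.filter (fun w : Fin n => inP1 n w)).card = 2 * N := by
              rw [hsplitP, Finset.card_union_of_disjoint hdisj, hA1card, hA2card]
              omega
            rw [Finset.sum_const, hPcard, nsmul_eq_mul]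
            push_cast; try ring
          rw [hdeg v, if_neg hv, hPsum] at hsplit2
          linarith
        rw [Finset.sum_erase_eq_sub hvmem, htot, hMvv v, if_neg hv]
      have hPcard : (Finset.univ.filter (fun w : Fin n => inP1 n w)).card = 2 * N := by
        rw [hsplitP, Finset.card_union_of_disjoint hdisj, hA1card, hA2card]
        omega
      rw [hstep1, hstep2, hdiag]
      rw [Finset.sum_congr rfl hinside, Finset.sum_congr rfl hcrossE]
      rw [← Finset.sum_mul, ← Finset.sum_mul, hsumM, Finset.sum_const, hPcard, nsmul_eq_mul]
      have hterm2 : (dR - 2 * ν * q - p) * (1 / (dR - p) - 1 / dR) ≤ p / dR := by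
        have hΔ : 0 ≤ 1 / (dR - p) - 1 / dR := by
          have := one_div_le_one_div_of_le hd'Rpos hd'RleR
          linarith
        have h1 : (dR - 2 * ν * q - p) * (1 / (dR - p) - 1 / dR)
            ≤ (dR - p) * (1 / (dR - p) - 1 / dR) := by
          apply mul_le_mul_of_nonneg_right (by linarith) hΔ
        have h2' : (dR - p) * (1 / (dR - p) - 1 / dR) = p / dR := by
          field_simp
          ring
        linarith
      have hterm3 : ((2 * N : ℕ) : ℝ) * q * (1 / (Real.sqrt (dL - K * p) * Real.sqrt (dR - p))
          - 1 / (Real.sqrt dL * Real.sqrt dR))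
          ≤ K * p / (2 * (dL - K * p)) + p / (2 * (dR - p)) := by
        have hcast : ((2 * N : ℕ) : ℝ) * q * (1 / (Real.sqrt (dL - K * p) * Real.sqrt (dR - p))
            - 1 / (Real.sqrt dL * Real.sqrt dR))
            = 2 * ν * q * (1 / (Real.sqrt (dL - K * p) * Real.sqrt (dR - p))
            - 1 / (Real.sqrt dL * Real.sqrt dR)) := by
          rw [hν]; push_cast; ring
        rw [hcast]
        exact hcrossbd
      linarith [hterm2, hterm3, b1', b2, b3, b4]
  -- conclude
  rw [hncast]
  apply aux_opNorm_le_rowsum E (6 * K / (4 * ν - 2)) (by positivity)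
  · exact hrowE
  · intro w
    have : ∑ v', |E v' w| = ∑ v', |E w v'| := by
      apply Finset.sum_congr rfl
      intro v' _
      rw [hEsymm v' w]
    rw [this]
    exact hrowE w


end
end
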